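/- Let H_1 and H_2 be complex Hilbert spaces. Let V_1, …, V_n be bounded operators on H_1 that are pure in the sense that ⋂_{k ≥ 1} (closed linear span of ⋃_{|w| = k} range(V_w)) = {0}, where w ranges over words of length k in the free monoid on {1, …, n}. Let S_1, …, S_n be bounded operators on H_2 with ∑_{j=1}^n S_j S_j* = I. If B : H_2 → H_1 is a bounded operator satisfying V_j B = B S_j for all 1 ≤ j ≤ n, then B = 0. -/

import Mathlib

open ContinuousLinearMap in
/-- If `V₁, …, Vₙ` is pure, i.e. `⋂_{k ≥ 1} span closure (⋃_{|w|=k} ran V_w) = {0}`,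
`∑ Sⱼ Sⱼ* = 1`, and `Vⱼ B = B Sⱼ` for all `j`, then `B = 0`. -/
theorem intertwiner_into_pure_part_vanishes
    {H₁ H₂ : Type*}
    [NormedAddCommGroup H₁] [InnerProductSpace ℂ H₁] [CompleteSpace H₁]
    [NormedAddCommGroup H₂] [InnerProductSpace ℂ H₂] [CompleteSpace H₂]
    {n : ℕ} (V : Fin n → H₁ →L[ℂ] H₁) (S : Fin n → H₂ →L[ℂ] H₂)
    (hpure : ⨅ (k : ℕ) (_ : 1 ≤ k),
        (⨆ w : Fin k → Fin n,
          LinearMap.range ((((List.ofFn w).map V).prod : H₁ →L[ℂ] H₁) : H₁ →ₗ[ℂ] H₁)).topologicalClosure = ⊥)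
    (hS : ∑ j, S j * star (S j) = 1)
    (B : H₂ →L[ℂ] H₁)
    (hB : ∀ j, V j ∘L B = B ∘L S j) :
    B = 0 := by
  have hdecomp : ∀ x : H₂, B x = ∑ j, V j (B (star (S j) x)) := by
    intro x
    have h1 : B x = B ((∑ j, S j * star (S j)) x) := by rw [hS]; simp
    rw [h1]
    simp only [ContinuousLinearMap.sum_apply, map_sum, ContinuousLinearMap.mul_apply]
    refine Finset.sum_congr rfl fun j _ => ?_
    have := congrArg (fun T : H₂ →L[ℂ] H₁ => T (star (S j) x)) (hB j)
    simpa using this.symm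
  have hcons : ∀ (k : ℕ) (j : Fin n) (w : Fin k → Fin n),
      ((List.ofFn (Fin.cons j w : Fin (k+1) → Fin n)).map V).prod
        = V j * ((List.ofFn w).map V).prod := by
    intro k j w
    rw [List.ofFn_succ]
    simp
  have key : ∀ k, 1 ≤ k → ∀ x : H₂, B x ∈
      (⨆ w : Fin k → Fin n, LinearMap.range ((((List.ofFn w).map V).prod : H₁ →L[ℂ] H₁) : H₁ →ₗ[ℂ] H₁)) := by
    intro k
    induction k with
    | zero => omega
    | succ k ih =>
      intro _ x
      rw [hdecomp x]
      apply Submodule.sum_mem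
      intro j _
      by_cases hk1 : 1 ≤ k
      · have hy := ih hk1 (star (S j) x)
        refine Submodule.iSup_induction
          (motive := fun z => V j z ∈ ⨆ w : Fin (k+1) → Fin n,
            LinearMap.range ((((List.ofFn w).map V).prod : H₁ →L[ℂ] H₁) : H₁ →ₗ[ℂ] H₁))
          _ hy ?_ ?_ ?_
        · rintro w z ⟨u, hu⟩
          refine Submodule.mem_iSup_of_mem (Fin.cons j w) ?_
          refine ⟨u, ?_⟩
          rw [hcons k j w]
          simp [← hu]
        · simp
        · intro a b ha hb
          rw [map_add]
          exact Submodule.add_mem _ ha hb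
      · have hk0 : k = 0 := by omega
        subst hk0
        refine Submodule.mem_iSup_of_mem (fun _ => j) ?_
        refine ⟨B (star (S j) x), ?_⟩
        simp
  ext x
  have hx : B x ∈ (⊥ : Submodule ℂ H₁) := by
    rw [← hpure]
    simp only [Submodule.mem_iInf]
    intro k hk
    exact Submodule.le_topologicalClosure _ (key k hk x)
  simpa using hx
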